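/- Let a be a full-rank n×m real matrix with m ≤ n, and let L be any n×n matrix of the form L = b a^+ for some n×m matrix b, where a^+ = (a^T a)^{-1} a^T. Then (tr L)^2 ≤ m · tr(L^T L), with equality if and only if b = c a for some real scalar c. -/

import Mathlib

open Matrix
open scoped RealInnerProductSpace

lemma aux_isUnit_det {m : ℕ} (M : Matrix (Fin m) (Fin m) ℝ) (h : M.rank = m) :
    IsUnit M.det := by
  rw [← Matrix.isUnit_iff_isUnit_det, ← Matrix.mulVec_surjective_iff_isUnit]
  have htop : LinearMap.range M.mulVecLin = ⊤ := by
    apply Submodule.eq_top_of_finrank_eq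
    rw [Module.finrank_pi]
    simpa [Matrix.rank] using h
  intro v
  obtain ⟨w, hw⟩ := LinearMap.range_eq_top.mp htop v
  exact ⟨w, hw⟩

/-- For `L = b a⁺` with `a` full rank, `(tr L)² ≤ m tr(Lᵀ L)`,
with equality iff `b = c • a` for some scalar `c`. -/
theorem stmt_4 {n m : ℕ} (hmn : m ≤ n) (a b : Matrix (Fin n) (Fin m) ℝ)
    (ha : a.rank = m)
    (L : Matrix (Fin n) (Fin n) ℝ) (hL : L = b * ((aᵀ * a)⁻¹ * aᵀ)) :
    (Matrix.trace L) ^ 2 ≤ (m : ℝ) * Matrix.trace (Lᵀ * L) ∧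
    ((Matrix.trace L) ^ 2 = (m : ℝ) * Matrix.trace (Lᵀ * L) ↔ ∃ c : ℝ, b = c • a) := by
  set A : Matrix (Fin m) (Fin n) ℝ := (aᵀ * a)⁻¹ * aᵀ with hA
  have hu : IsUnit (aᵀ * a).det :=
    aux_isUnit_det _ (by rw [Matrix.rank_transpose_mul_self, ha])
  have hAa : A * a = 1 := by
    rw [hA, Matrix.mul_assoc, Matrix.nonsing_inv_mul _ hu]
  set P : Matrix (Fin n) (Fin n) ℝ := a * A with hP
  have hPsymm : Pᵀ = P := by
    rw [hP, hA, Matrix.transpose_mul, Matrix.transpose_mul, Matrix.transpose_transpose,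
      Matrix.transpose_nonsing_inv, Matrix.transpose_mul, Matrix.transpose_transpose,
      Matrix.mul_assoc]
  have hPa : P * a = a := by rw [hP, Matrix.mul_assoc, hAa, Matrix.mul_one]
  have hPP : P * P = P := by rw [hP, ← Matrix.mul_assoc, Matrix.mul_assoc a A a, hAa,
    Matrix.mul_one]
  have hLP : L * P = L := by
    rw [hL, hP, ← Matrix.mul_assoc, Matrix.mul_assoc b A a, hAa, Matrix.mul_one]
  have hba : b = L * a := by rw [hL, Matrix.mul_assoc, hAa, Matrix.mul_one]
  have htrP : P.trace = (m : ℝ) := by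
    rw [hP, Matrix.trace_mul_comm, hAa, Matrix.trace_one]
    simp
  -- inner product space setup
  set x : EuclideanSpace ℝ (Fin n × Fin n) := WithLp.toLp 2 (fun p => L p.1 p.2) with hx
  set y : EuclideanSpace ℝ (Fin n × Fin n) := WithLp.toLp 2 (fun p => P p.1 p.2) with hy
  have hxy : (inner ℝ x y : ℝ) = Matrix.trace L := by
    conv_rhs => rw [← hLP]
    rw [Matrix.trace]
    simp only [PiLp.inner_apply, RCLike.inner_apply, conj_trivial, Matrix.diag_apply,
      Matrix.mul_apply]
    rw [Fintype.sum_prod_type]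
    congr 1; ext i; congr 1; ext j
    have : P j i = P i j := by conv_lhs => rw [← hPsymm, Matrix.transpose_apply]
    rw [hx, hy]
    simp [this, mul_comm]
  have hxx : (inner ℝ x x : ℝ) = Matrix.trace (Lᵀ * L) := by
    rw [Matrix.trace]
    simp only [PiLp.inner_apply, RCLike.inner_apply, conj_trivial, Matrix.diag_apply,
      Matrix.mul_apply, Matrix.transpose_apply]
    rw [Fintype.sum_prod_type, Finset.sum_comm]
  have hyy : (inner ℝ y y : ℝ) = (m : ℝ) := by
    have : Matrix.trace (Pᵀ * P) = (m : ℝ) := by rw [hPsymm, hPP, htrP]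
    rw [← this, Matrix.trace]
    simp only [PiLp.inner_apply, RCLike.inner_apply, conj_trivial, Matrix.diag_apply,
      Matrix.mul_apply, Matrix.transpose_apply]
    rw [Fintype.sum_prod_type, Finset.sum_comm]
  have hCS := real_inner_mul_inner_self_le x y
  rw [hxy, hxx, hyy] at hCS
  constructor
  · nlinarith [hCS]
  constructor
  · -- equality → proportional
    intro h
    by_cases hL0 : L = 0
    · exact ⟨0, by simp [hba, hL0]⟩
    · have hx0 : x ≠ 0 := by
        intro h0
        apply hL0
        ext i j
        have := congrArg (· (i, j)) h0
        simpa [hx] using this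
      have hm0 : m ≠ 0 := by
        intro hm
        apply hL0
        have : IsEmpty (Fin m) := by rw [hm]; exact Fin.isEmpty'
        ext i j
        simp [hL, Matrix.mul_apply]
      have hy0 : y ≠ 0 := by
        intro h0
        have : P = 0 := by
          ext i j
          have := congrArg (· (i, j)) h0
          simpa [hy] using this
        rw [this, Matrix.trace_zero] at htrP
        exact hm0 (by exact_mod_cast htrP.symm)
      have habs : ‖(inner ℝ x y : ℝ)‖ = ‖x‖ * ‖y‖ := by
        have h1 : (inner ℝ x y : ℝ) ^ 2 = (‖x‖ * ‖y‖) ^ 2 := by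
          rw [hxy]
          rw [h]
          rw [← hxx, ← hyy]
          rw [real_inner_self_eq_norm_sq, real_inner_self_eq_norm_sq]
          ring
        have h2 : (0:ℝ) ≤ ‖x‖ * ‖y‖ := mul_nonneg (norm_nonneg x) (norm_nonneg y)
        rw [Real.norm_eq_abs]
        nlinarith [abs_nonneg (inner ℝ x y : ℝ), sq_abs (inner ℝ x y : ℝ)]
      obtain ⟨r, hr0, hyx⟩ := (norm_inner_eq_norm_iff hx0 hy0).mp habs
      have hLrP : L = r⁻¹ • P := by
        ext i j
        have := congrArg (· (i, j)) hyx
        simp only [PiLp.smul_apply, smul_eq_mul] at this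
        have hPij : P i j = r * L i j := by simpa [hx, hy] using this
        simp [Matrix.smul_apply, hPij, smul_eq_mul]
        field_simp
      refine ⟨r⁻¹, ?_⟩
      rw [hba, hLrP, Matrix.smul_mul, hPa]
  · -- proportional → equality
    rintro ⟨c, rfl⟩
    have hLcP : L = c • P := by rw [hL, Matrix.smul_mul]
    have h1 : Matrix.trace L = c * m := by rw [hLcP, Matrix.trace_smul, htrP, smul_eq_mul]
    have h2 : Matrix.trace (Lᵀ * L) = c ^ 2 * m := by
      rw [hLcP, Matrix.transpose_smul, Matrix.smul_mul, Matrix.mul_smul, hPsymm, hPP,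
        smul_smul, Matrix.trace_smul, htrP, smul_eq_mul]
      ring
    rw [h1, h2]
    ring
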